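/- Let A and B be finite-dimensional k-algebras, M an A-B-bimodule and N a B-A-bimodule such that N ⊗_A M is isomorphic, as a B-B-bimodule, to B ⊕ Q for some B-B-bimodule Q which is projective as a left B-module and as a right B-module. Assume that the functors M ⊗_B − : B-mod → A-mod and N ⊗_A − : A-mod → B-mod are biadjoint. If A is symmetric, i.e. A is isomorphic to its k-linear dual Hom_k(A, k) as an A-A-bimodule, then B is self-injective: B is injective as a left B-module and as a right B-module. -/

import Mathlib

set_option linter.unusedSectionVars false

open scoped TensorProduct
open MulOpposite

universe u

namespace JJ

attribute [local instance high] TensorProduct.instModule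

noncomputable section

section BalTensor

variable (B : Type u) [Ring B] (M : Type u) [AddCommGroup M] [Module Bᵐᵒᵖ M]
  (N : Type u) [AddCommGroup N] [Module B N]

/-- The subgroup of relations defining the balanced tensor product `M ⊗_B N`. -/
def balRel : Submodule ℤ (TensorProduct ℤ M N) :=
  Submodule.span ℤ { z | ∃ (b : B) (m : M) (n : N),
    z = (op b • m) ⊗ₜ[ℤ] n - m ⊗ₜ[ℤ] (b • n) }

/-- The balanced tensor product `M ⊗_B N` of a right `B`-module `M` and a left `B`-module `N`. -/
def BalTensor : Type u := TensorProduct ℤ M N ⧸ balRel B M N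

instance : AddCommGroup (BalTensor B M N) :=
  inferInstanceAs (AddCommGroup (TensorProduct ℤ M N ⧸ balRel B M N))

/-- The canonical projection onto the balanced tensor product. -/
def BalTensor.mk : TensorProduct ℤ M N →+ BalTensor B M N :=
  (balRel B M N).mkQ.toAddMonoidHom

/-- The image of a pure tensor in the balanced tensor product. -/
def BalTensor.tmul (m : M) (n : N) : BalTensor B M N := BalTensor.mk B M N (m ⊗ₜ n)

lemma BalTensor.mk_surjective : Function.Surjective (BalTensor.mk B M N) :=
  Submodule.mkQ_surjective _

lemma BalTensor.balance (b : B) (m : M) (n : N) :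
    BalTensor.tmul B M N (op b • m) n = BalTensor.tmul B M N m (b • n) := by
  have h : ((op b • m) ⊗ₜ[ℤ] n - m ⊗ₜ[ℤ] (b • n)) ∈ balRel B M N :=
    Submodule.subset_span ⟨b, m, n, rfl⟩
  have h2 := (Submodule.Quotient.mk_eq_zero (balRel B M N)).2 h
  rw [Submodule.Quotient.mk_sub] at h2
  exact sub_eq_zero.1 h2

end BalTensor

section LeftAction

variable (B : Type u) [Ring B] (M : Type u) [AddCommGroup M] [Module Bᵐᵒᵖ M]
  (N : Type u) [AddCommGroup N] [Module B N]
  (A : Type u) [Ring A] [Module A M] [SMulCommClass A Bᵐᵒᵖ M]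

/-- The left action of `a : A` on the plain tensor product. -/
def lActAux (a : A) : TensorProduct ℤ M N →ₗ[ℤ] TensorProduct ℤ M N :=
  LinearMap.rTensor N (DistribMulAction.toAddMonoidHom M a).toIntLinearMap

lemma lActAux_tmul (a : A) (m : M) (n : N) :
    lActAux M N A a (m ⊗ₜ n) = (a • m) ⊗ₜ n := by
  simp [lActAux]

lemma lActAux_rel (a : A) :
    balRel B M N ≤ (balRel B M N).comap (lActAux M N A a) := by
  rw [balRel, Submodule.span_le]
  rintro z ⟨b, m, n, rfl⟩
  simp only [SetLike.mem_coe, Submodule.mem_comap, map_sub, lActAux_tmul]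
  rw [smul_comm a (op b) m]
  exact Submodule.subset_span ⟨b, a • m, n, rfl⟩

/-- The left action of `A` on the balanced tensor product. -/
def lAct (a : A) : BalTensor B M N →ₗ[ℤ] BalTensor B M N :=
  Submodule.mapQ _ _ (lActAux M N A a) (lActAux_rel B M N A a)

instance : SMul A (BalTensor B M N) := ⟨fun a x => lAct B M N A a x⟩

lemma BalTensor.lsmul_mk (a : A) (x : TensorProduct ℤ M N) :
    a • (BalTensor.mk B M N x) = BalTensor.mk B M N (lActAux M N A a x) := rfl

lemma BalTensor.lsmul_tmul (a : A) (m : M) (n : N) :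
    a • (BalTensor.tmul B M N m n) = BalTensor.tmul B M N (a • m) n := by
  rw [BalTensor.tmul, BalTensor.lsmul_mk, lActAux_tmul]
  rfl

instance BalTensor.instLeftModule : Module A (BalTensor B M N) where
  one_smul x := by
    obtain ⟨y, rfl⟩ := BalTensor.mk_surjective B M N x
    rw [BalTensor.lsmul_mk]
    congr 1
    have h : lActAux M N A (1 : A) = LinearMap.id :=
      TensorProduct.ext' fun m n => by rw [lActAux_tmul, one_smul]; rfl
    rw [h]; rfl
  mul_smul a b x := by
    obtain ⟨y, rfl⟩ := BalTensor.mk_surjective B M N x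
    rw [BalTensor.lsmul_mk, BalTensor.lsmul_mk, BalTensor.lsmul_mk]
    congr 1
    have h : lActAux M N A (a * b) = (lActAux M N A a).comp (lActAux M N A b) :=
      TensorProduct.ext' fun m n => by
        simp only [LinearMap.comp_apply, lActAux_tmul, mul_smul]
    rw [h]; rfl
  smul_zero a := map_zero (lAct B M N A a)
  smul_add a x y := map_add (lAct B M N A a) x y
  add_smul a b x := by
    obtain ⟨y, rfl⟩ := BalTensor.mk_surjective B M N x
    rw [BalTensor.lsmul_mk, BalTensor.lsmul_mk, BalTensor.lsmul_mk, ← map_add]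
    congr 1
    have h : lActAux M N A (a + b) = lActAux M N A a + lActAux M N A b :=
      TensorProduct.ext' fun m n => by
        simp only [LinearMap.add_apply, lActAux_tmul, add_smul, TensorProduct.add_tmul]
    rw [h]; rfl
  zero_smul x := by
    obtain ⟨y, rfl⟩ := BalTensor.mk_surjective B M N x
    rw [BalTensor.lsmul_mk]
    have h : lActAux M N A (0 : A) = 0 :=
      TensorProduct.ext' fun m n => by
        simp only [lActAux_tmul, zero_smul, TensorProduct.zero_tmul, LinearMap.zero_apply]
    rw [h]
    simp

end LeftAction

section RightAction

variable (B : Type u) [Ring B] (M : Type u) [AddCommGroup M] [Module Bᵐᵒᵖ M]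
  (N : Type u) [AddCommGroup N] [Module B N]
  (C : Type u) [Ring C] [Module Cᵐᵒᵖ N] [SMulCommClass B Cᵐᵒᵖ N]

/-- The right action of `c : Cᵐᵒᵖ` on the plain tensor product. -/
def rActAux (c : Cᵐᵒᵖ) : TensorProduct ℤ M N →ₗ[ℤ] TensorProduct ℤ M N :=
  LinearMap.lTensor M (DistribMulAction.toAddMonoidHom N c).toIntLinearMap

lemma rActAux_tmul (c : Cᵐᵒᵖ) (m : M) (n : N) :
    rActAux M N C c (m ⊗ₜ n) = m ⊗ₜ (c • n) := by
  simp [rActAux]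

lemma rActAux_rel (c : Cᵐᵒᵖ) :
    balRel B M N ≤ (balRel B M N).comap (rActAux M N C c) := by
  rw [balRel, Submodule.span_le]
  rintro z ⟨b, m, n, rfl⟩
  simp only [SetLike.mem_coe, Submodule.mem_comap, map_sub, rActAux_tmul]
  rw [← smul_comm b c n]
  exact Submodule.subset_span ⟨b, m, c • n, rfl⟩

/-- The right action of `Cᵐᵒᵖ` on the balanced tensor product. -/
def rAct (c : Cᵐᵒᵖ) : BalTensor B M N →ₗ[ℤ] BalTensor B M N :=
  Submodule.mapQ _ _ (rActAux M N C c) (rActAux_rel B M N C c)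

instance : SMul Cᵐᵒᵖ (BalTensor B M N) := ⟨fun c x => rAct B M N C c x⟩

lemma BalTensor.rsmul_mk (c : Cᵐᵒᵖ) (x : TensorProduct ℤ M N) :
    c • (BalTensor.mk B M N x) = BalTensor.mk B M N (rActAux M N C c x) := rfl

lemma BalTensor.rsmul_tmul (c : Cᵐᵒᵖ) (m : M) (n : N) :
    c • (BalTensor.tmul B M N m n) = BalTensor.tmul B M N m (c • n) := by
  rw [BalTensor.tmul, BalTensor.rsmul_mk, rActAux_tmul]
  rfl

instance BalTensor.instRightModule : Module Cᵐᵒᵖ (BalTensor B M N) where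
  one_smul x := by
    obtain ⟨y, rfl⟩ := BalTensor.mk_surjective B M N x
    rw [BalTensor.rsmul_mk]
    congr 1
    have h : rActAux M N C (1 : Cᵐᵒᵖ) = LinearMap.id :=
      TensorProduct.ext' fun m n => by rw [rActAux_tmul, one_smul]; rfl
    rw [h]; rfl
  mul_smul a b x := by
    obtain ⟨y, rfl⟩ := BalTensor.mk_surjective B M N x
    rw [BalTensor.rsmul_mk, BalTensor.rsmul_mk, BalTensor.rsmul_mk]
    congr 1
    have h : rActAux M N C (a * b) = (rActAux M N C a).comp (rActAux M N C b) :=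
      TensorProduct.ext' fun m n => by
        simp only [LinearMap.comp_apply, rActAux_tmul, mul_smul]
    rw [h]; rfl
  smul_zero c := map_zero (rAct B M N C c)
  smul_add c x y := map_add (rAct B M N C c) x y
  add_smul a b x := by
    obtain ⟨y, rfl⟩ := BalTensor.mk_surjective B M N x
    rw [BalTensor.rsmul_mk, BalTensor.rsmul_mk, BalTensor.rsmul_mk, ← map_add]
    congr 1
    have h : rActAux M N C (a + b) = rActAux M N C a + rActAux M N C b :=
      TensorProduct.ext' fun m n => by
        simp only [LinearMap.add_apply, rActAux_tmul, add_smul, TensorProduct.tmul_add]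
    rw [h]; rfl
  zero_smul x := by
    obtain ⟨y, rfl⟩ := BalTensor.mk_surjective B M N x
    rw [BalTensor.rsmul_mk]
    have h : rActAux M N C (0 : Cᵐᵒᵖ) = 0 :=
      TensorProduct.ext' fun m n => by
        simp only [rActAux_tmul, zero_smul, TensorProduct.tmul_zero, LinearMap.zero_apply]
    rw [h]
    simp

end RightAction

section Comm

variable (B : Type u) [Ring B] (M : Type u) [AddCommGroup M] [Module Bᵐᵒᵖ M]
  (N : Type u) [AddCommGroup N] [Module B N]
  (A : Type u) [Ring A] [Module A M] [SMulCommClass A Bᵐᵒᵖ M]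
  (C : Type u) [Ring C] [Module Cᵐᵒᵖ N] [SMulCommClass B Cᵐᵒᵖ N]

instance BalTensor.instSMulCommClass : SMulCommClass A Cᵐᵒᵖ (BalTensor B M N) := by
  constructor
  intro a c x
  obtain ⟨y, rfl⟩ := BalTensor.mk_surjective B M N x
  rw [BalTensor.rsmul_mk, BalTensor.lsmul_mk, BalTensor.lsmul_mk, BalTensor.rsmul_mk]
  congr 1
  have h : (lActAux M N A a).comp (rActAux M N C c)
      = (rActAux M N C c).comp (lActAux M N A a) :=
    TensorProduct.ext' fun m n => by
      simp only [LinearMap.comp_apply, lActAux_tmul, rActAux_tmul]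
  exact DFunLike.congr_fun h y

end Comm

section BimodHom

variable (A : Type u) [Ring A] (C : Type u) [Ring C]
variable (X : Type u) [AddCommGroup X] [Module A X] [Module Cᵐᵒᵖ X]
variable (Y : Type u) [AddCommGroup Y] [Module A Y] [Module Cᵐᵒᵖ Y]

/-- A map of `(A,C)`-bimodules: additive, left `A`-equivariant and right `C`-equivariant. -/
structure IsBimodHom (f : X → Y) : Prop where
  map_add : ∀ x y, f (x + y) = f x + f y
  map_lsmul : ∀ (a : A) (x : X), f (a • x) = a • f x
  map_rsmul : ∀ (c : Cᵐᵒᵖ) (x : X), f (c • x) = c • f x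

/-- `X` is (isomorphic to) a direct summand of `Y` as an `(A,C)`-bimodule,
i.e. a retract of `Y`. -/
def IsBimodSummand : Prop :=
  ∃ (i : X → Y) (p : Y → X), IsBimodHom A C X Y i ∧ IsBimodHom A C Y X p ∧ ∀ x, p (i x) = x

end BimodHom

section Jorder

variable (k : Type u) [Field k]

/-- A finite-dimensional `(A,B)`-bimodule over `k`, whose two induced `k`-actions agree
with the given one. -/
structure BimodData (A B : Type u) [Ring A] [Ring B] [Algebra k A] [Algebra k B] :
    Type (u + 1) where
  X : Type u
  [acg : AddCommGroup X]
  [modk : Module k X]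
  [modl : Module A X]
  [modr : Module Bᵐᵒᵖ X]
  [scc : SMulCommClass A Bᵐᵒᵖ X]
  [tl : IsScalarTower k A X]
  [tr : IsScalarTower k Bᵐᵒᵖ X]
  [fd : FiniteDimensional k X]

attribute [instance] BimodData.acg BimodData.modk BimodData.modl BimodData.modr BimodData.scc
  BimodData.tl BimodData.tr BimodData.fd

variable (A B : Type u) [Ring A] [Ring B] [Algebra k A] [Algebra k B]

/-- `A ≥_J B`: there are finite-dimensional bimodules `M`, `N` such that the regular
`A`-`A`-bimodule `A` is a direct summand of `M ⊗_B N`. -/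
def Jge : Prop :=
  ∃ (M : BimodData k A B) (N : BimodData k B A),
    IsBimodSummand A A A (BalTensor B M.X N.X)

/-- `A ≤_J B`. -/
def Jle : Prop := Jge k B A

/-- `A ∼_J B`: two-sided equivalence. -/
def Jequiv : Prop := Jge k A B ∧ Jge k B A

/-- `A >_J B`: strict two-sided inequality. -/
def Jgt : Prop := Jge k A B ∧ ¬ Jge k B A

end Jorder


section RMap

variable (B : Type u) [Ring B] (M : Type u) [AddCommGroup M] [Module Bᵐᵒᵖ M]
  (A : Type u) [Ring A] [Module A M] [SMulCommClass A Bᵐᵒᵖ M]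
  (X : Type u) [AddCommGroup X] [Module B X]
  (X' : Type u) [AddCommGroup X'] [Module B X']

/-- Auxiliary map `M ⊗ X → M ⊗ X'` induced by `f : X → X'`. -/
def rmapAux (f : X →ₗ[B] X') : TensorProduct ℤ M X →ₗ[ℤ] TensorProduct ℤ M X' :=
  LinearMap.lTensor M f.toAddMonoidHom.toIntLinearMap

lemma rmapAux_tmul (f : X →ₗ[B] X') (m : M) (x : X) :
    rmapAux B M X X' f (m ⊗ₜ x) = m ⊗ₜ (f x) := by
  simp [rmapAux]

lemma rmapAux_rel (f : X →ₗ[B] X') :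
    balRel B M X ≤ (balRel B M X').comap (rmapAux B M X X' f) := by
  rw [balRel, Submodule.span_le]
  rintro z ⟨b, m, x, rfl⟩
  simp only [SetLike.mem_coe, Submodule.mem_comap, map_sub, rmapAux_tmul, map_smul]
  exact Submodule.subset_span ⟨b, m, f x, rfl⟩

/-- The map `M ⊗_B X → M ⊗_B X'` induced by `f : X → X'`, as a `ℤ`-linear map. -/
def rmapQ (f : X →ₗ[B] X') : BalTensor B M X →ₗ[ℤ] BalTensor B M X' :=
  Submodule.mapQ _ _ (rmapAux B M X X' f) (rmapAux_rel B M X X' f)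

lemma rmapQ_mk (f : X →ₗ[B] X') (z : TensorProduct ℤ M X) :
    rmapQ B M X X' f (BalTensor.mk B M X z) = BalTensor.mk B M X' (rmapAux B M X X' f z) :=
  rfl

lemma rmapAux_lActAux (f : X →ₗ[B] X') (a : A) (z : TensorProduct ℤ M X) :
    rmapAux B M X X' f (lActAux M X A a z) = lActAux M X' A a (rmapAux B M X X' f z) := by
  have h : (rmapAux B M X X' f).comp (lActAux M X A a)
      = (lActAux M X' A a).comp (rmapAux B M X X' f) := by
    unfold rmapAux lActAux
    rw [LinearMap.lTensor_comp_rTensor, LinearMap.rTensor_comp_lTensor]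
  exact DFunLike.congr_fun h z

/-- The functorial map `M ⊗_B X → M ⊗_B X'` induced by `f : X → X'`,
as a map of left `A`-modules. -/
def rmapA (f : X →ₗ[B] X') : BalTensor B M X →ₗ[A] BalTensor B M X' where
  toFun := rmapQ B M X X' f
  map_add' := map_add _
  map_smul' a y := by
    obtain ⟨z, rfl⟩ := BalTensor.mk_surjective B M X y
    simp only [RingHom.id_apply]
    rw [BalTensor.lsmul_mk, rmapQ_mk, rmapQ_mk, BalTensor.lsmul_mk, rmapAux_lActAux]

end RMap

section Adjunction

variable (k : Type u) [Field k]

/-- A bundled finite (i.e. finite-dimensional) module over a ring. -/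
structure FinModuleData (R : Type u) [Ring R] : Type (u + 1) where
  X : Type u
  [acg : AddCommGroup X]
  [mod : Module R X]
  [fin : Module.Finite R X]

attribute [instance] FinModuleData.acg FinModuleData.mod FinModuleData.fin

variable (A : Type u) [Ring A] (B : Type u) [Ring B]
  (M : Type u) [AddCommGroup M] [Module A M] [Module Bᵐᵒᵖ M] [SMulCommClass A Bᵐᵒᵖ M]
  (N : Type u) [AddCommGroup N] [Module B N] [Module Aᵐᵒᵖ N] [SMulCommClass B Aᵐᵒᵖ N]

/-- The functor `M ⊗_B −` from finite-dimensional left `B`-modules to finite-dimensional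
left `A`-modules is left adjoint to the functor `N ⊗_A −`: there is a bijection of
hom-sets which is natural in both variables. -/
def TensorAdjunction : Prop :=
  ∃ e : ∀ (X : FinModuleData B) (Y : FinModuleData A),
      (BalTensor B M X.X →ₗ[A] Y.X) ≃ (X.X →ₗ[B] BalTensor A N Y.X),
    (∀ (X X' : FinModuleData B) (f : X.X →ₗ[B] X'.X) (Y : FinModuleData A)
        (h : BalTensor B M X'.X →ₗ[A] Y.X),
        e X Y (h.comp (rmapA B M A X.X X'.X f)) = (e X' Y h).comp f) ∧
    (∀ (X : FinModuleData B) (Y Y' : FinModuleData A) (g : Y.X →ₗ[A] Y'.X)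
        (h : BalTensor B M X.X →ₗ[A] Y.X),
        e X Y' (g.comp h) = (rmapA A N B Y.X Y'.X g).comp (e X Y h))

end Adjunction
section DualBimod

variable (k : Type u) [Field k] (A : Type u) [Ring A] [Algebra k A]

/-- The left `A`-action on the `k`-linear dual `Hom_k(A, k)`, `(a • f) x = f (x a)`. -/
instance : Module A (A →ₗ[k] k) where
  smul a f := f.comp (LinearMap.mulRight k a)
  one_smul f := LinearMap.ext fun x => by
    show f (x * 1) = f x
    rw [mul_one]
  mul_smul a b f := LinearMap.ext fun x => by
    show f (x * (a * b)) = f ((x * a) * b)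
    rw [mul_assoc]
  smul_zero a := LinearMap.ext fun x => rfl
  smul_add a f f' := LinearMap.ext fun x => rfl
  add_smul a b f := LinearMap.ext fun x => by
    show f (x * (a + b)) = f (x * a) + f (x * b)
    rw [mul_add, map_add]
  zero_smul f := LinearMap.ext fun x => by
    show f (x * 0) = 0
    rw [mul_zero, map_zero]

lemma dual_lsmul_apply (a : A) (f : A →ₗ[k] k) (x : A) : (a • f) x = f (x * a) := rfl

/-- The right `A`-action on the `k`-linear dual `Hom_k(A, k)`, `(f • a) x = f (a x)`. -/
instance : Module Aᵐᵒᵖ (A →ₗ[k] k) where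
  smul c f := f.comp (LinearMap.mulLeft k c.unop)
  one_smul f := LinearMap.ext fun x => by
    show f ((1 : Aᵐᵒᵖ).unop * x) = f x
    rw [MulOpposite.unop_one, one_mul]
  mul_smul c c' f := LinearMap.ext fun x => by
    show f ((c * c').unop * x) = f (c'.unop * (c.unop * x))
    rw [MulOpposite.unop_mul, mul_assoc]
  smul_zero c := LinearMap.ext fun x => rfl
  smul_add c f f' := LinearMap.ext fun x => rfl
  add_smul c c' f := LinearMap.ext fun x => by
    show f ((c + c').unop * x) = f (c.unop * x) + f (c'.unop * x)
    rw [MulOpposite.unop_add, add_mul, map_add]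
  zero_smul f := LinearMap.ext fun x => by
    show f ((0 : Aᵐᵒᵖ).unop * x) = 0
    rw [MulOpposite.unop_zero, zero_mul, map_zero]

lemma dual_rsmul_apply (c : Aᵐᵒᵖ) (f : A →ₗ[k] k) (x : A) : (c • f) x = f (c.unop * x) := rfl

instance : SMulCommClass A Aᵐᵒᵖ (A →ₗ[k] k) :=
  ⟨fun a c f => LinearMap.ext fun x => by
    rw [dual_lsmul_apply, dual_rsmul_apply, dual_rsmul_apply, dual_lsmul_apply, mul_assoc]⟩

/-- `A` is a symmetric algebra: `A ≅ Hom_k(A, k)` as `A`-`A`-bimodules. -/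
def IsSymmetricAlgebra : Prop :=
  ∃ s : A → (A →ₗ[k] k), IsBimodHom A A A (A →ₗ[k] k) s ∧ Function.Bijective s

end DualBimod


/-! ### Auxiliary material for the proof -/

section MyHelpers

variable {R : Type u} [Ring R]

/-- A retract of an injective module is injective. -/
lemma injective_of_retract {Z W : Type u} [AddCommGroup Z] [AddCommGroup W]
    [Module R Z] [Module R W] (i : Z →ₗ[R] W) (p : W →ₗ[R] Z)
    (hpi : ∀ z, p (i z) = z) (hW : Module.Injective R W) : Module.Injective R Z := by
  constructor
  intro X Y _ _ _ _ f hf g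
  obtain ⟨h, hh⟩ := hW.out f hf (i.comp g)
  refine ⟨p.comp h, fun x => ?_⟩
  simp only [LinearMap.comp_apply] at hh ⊢
  rw [hh x, hpi]

/-- Finite powers of an injective module are injective. -/
lemma injective_pi {W : Type u} [AddCommGroup W] [Module R W] (n : ℕ)
    (hW : Module.Injective R W) : Module.Injective R (Fin n → W) := by
  constructor
  intro X Y _ _ _ _ f hf g
  have H : ∀ j : Fin n, ∃ h : Y →ₗ[R] W, ∀ x, h (f x) = (LinearMap.proj j).comp g x :=
    fun j => hW.out f hf ((LinearMap.proj j).comp g)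
  choose h hh using H
  refine ⟨LinearMap.pi h, fun x => funext fun j => ?_⟩
  simpa using hh j x

/-- Lifting through a module equipped with an explicit finite free splitting. -/
lemma lift_of_split {Z W V : Type u} [AddCommGroup Z] [AddCommGroup W] [AddCommGroup V]
    [Module R Z] [Module R W] [Module R V] {n : ℕ}
    (σ : Z →ₗ[R] (Fin n → R)) (π : (Fin n → R) →ₗ[R] Z) (hπσ : ∀ z, π (σ z) = z)
    (q : W →ₗ[R] V) (hq : Function.Surjective q) (γ : Z →ₗ[R] V) :
    ∃ δ : Z →ₗ[R] W, ∀ z, q (δ z) = γ z := by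
  choose w hw using fun j : Fin n => hq (γ (π (Pi.single j 1)))
  let δ₀ : (Fin n → R) →ₗ[R] W :=
    { toFun := fun v => ∑ j, v j • w j
      map_add' := fun a b => by
        simp [add_smul, Finset.sum_add_distrib]
      map_smul' := fun r v => by
        simp [Finset.smul_sum, mul_smul] }
  refine ⟨δ₀.comp σ, fun z => ?_⟩
  have key : ∀ v : Fin n → R, q (δ₀ v) = γ (π v) := by
    intro v
    have : q (δ₀ v) = ∑ j, v j • γ (π (Pi.single j 1)) := by
      simp only [δ₀, LinearMap.coe_mk, AddHom.coe_mk, map_sum, map_smul]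
      exact Finset.sum_congr rfl fun j _ => by rw [hw]
    rw [this]
    have : ∑ j, v j • γ (π (Pi.single j 1)) = γ (π (∑ j, v j • (Pi.single j (1 : R) : Fin n → R))) := by
      rw [map_sum, map_sum]
      exact Finset.sum_congr rfl fun j _ => by rw [map_smul, map_smul]
    rw [this]
    congr 1
    congr 1
    have hsingle : ∀ j, v j • (Pi.single j (1 : R) : Fin n → R) = (Pi.single j (v j) : Fin n → R) := by
      intro j
      funext i
      by_cases h : i = j <;> simp [Pi.single_apply, h]
    simp only [hsingle]
    exact Finset.univ_sum_single v
  rw [LinearMap.comp_apply, key, hπσ]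

/-- A surjection from a finite free module onto a finite module. -/
lemma exists_free_cover (Z : Type u) [AddCommGroup Z] [Module R Z] [Module.Finite R Z] :
    ∃ (n : ℕ) (π : (Fin n → R) →ₗ[R] Z), Function.Surjective π := by
  obtain ⟨n, s, hs⟩ := Module.Finite.exists_fin (R := R) (M := Z)
  let π : (Fin n → R) →ₗ[R] Z :=
    { toFun := fun v => ∑ j, v j • s j
      map_add' := fun a b => by simp [add_smul, Finset.sum_add_distrib]
      map_smul' := fun r v => by simp [Finset.smul_sum, mul_smul] }
  refine ⟨n, π, fun z => ?_⟩
  have hz : z ∈ Submodule.span R (Set.range s) := hs ▸ Submodule.mem_top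
  induction hz using Submodule.span_induction with
  | mem x hx =>
      obtain ⟨j, rfl⟩ := hx
      refine ⟨Pi.single j 1, ?_⟩
      simp only [π, LinearMap.coe_mk, AddHom.coe_mk]
      rw [Finset.sum_eq_single j]
      · simp
      · intro i _ hij; simp [Pi.single_apply, hij]
      · simp
  | zero => exact ⟨0, by simp⟩
  | add x y _ _ hx hy =>
      obtain ⟨vx, rfl⟩ := hx; obtain ⟨vy, rfl⟩ := hy
      exact ⟨vx + vy, by rw [map_add]⟩
  | smul a x _ hx =>
      obtain ⟨v, rfl⟩ := hx
      exact ⟨a • v, by rw [map_smul]⟩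

end MyHelpers


section BalExtra

variable (B : Type u) [Ring B] (M : Type u) [AddCommGroup M] [Module Bᵐᵒᵖ M]
  (N : Type u) [AddCommGroup N] [Module B N]

lemma BalTensor.induction_on {P : BalTensor B M N → Prop} (z : BalTensor B M N)
    (h0 : P 0) (htmul : ∀ m n, P (BalTensor.tmul B M N m n))
    (hadd : ∀ x y, P x → P y → P (x + y)) : P z := by
  obtain ⟨w, rfl⟩ := BalTensor.mk_surjective B M N z
  induction w using TensorProduct.induction_on with
  | zero => rw [map_zero]; exact h0
  | tmul m n => exact htmul m n
  | add x y hx hy => rw [map_add]; exact hadd _ _ hx hy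

lemma BalTensor.tmul_add (m : M) (n n' : N) :
    BalTensor.tmul B M N m (n + n') = BalTensor.tmul B M N m n + BalTensor.tmul B M N m n' := by
  unfold BalTensor.tmul; rw [TensorProduct.tmul_add, map_add]

lemma BalTensor.add_tmul (m m' : M) (n : N) :
    BalTensor.tmul B M N (m + m') n = BalTensor.tmul B M N m n + BalTensor.tmul B M N m' n := by
  unfold BalTensor.tmul; rw [TensorProduct.add_tmul, map_add]

lemma BalTensor.tmul_zero (m : M) : BalTensor.tmul B M N m 0 = 0 := by
  unfold BalTensor.tmul; rw [TensorProduct.tmul_zero, map_zero]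

lemma BalTensor.zero_tmul (n : N) : BalTensor.tmul B M N 0 n = 0 := by
  unfold BalTensor.tmul; rw [TensorProduct.zero_tmul, map_zero]

lemma BalTensor.sum_tmul {ι : Type*} (s : Finset ι) (f : ι → M) (n : N) :
    BalTensor.tmul B M N (∑ i ∈ s, f i) n = ∑ i ∈ s, BalTensor.tmul B M N (f i) n := by
  classical
  induction s using Finset.induction with
  | empty => simp [BalTensor.zero_tmul]
  | insert _ _ h ih => rw [Finset.sum_insert h, Finset.sum_insert h, BalTensor.add_tmul, ih]

end BalExtra

section RMapExtra

variable (B : Type u) [Ring B] (M : Type u) [AddCommGroup M] [Module Bᵐᵒᵖ M]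
  (A : Type u) [Ring A] [Module A M] [SMulCommClass A Bᵐᵒᵖ M]
  (X : Type u) [AddCommGroup X] [Module B X]
  (X' : Type u) [AddCommGroup X'] [Module B X']
  (X'' : Type u) [AddCommGroup X''] [Module B X'']

lemma rmapA_tmul (f : X →ₗ[B] X') (m : M) (x : X) :
    rmapA B M A X X' f (BalTensor.tmul B M X m x) = BalTensor.tmul B M X' m (f x) := by
  show rmapQ B M X X' f (BalTensor.mk B M X (m ⊗ₜ x)) = _
  rw [rmapQ_mk, rmapAux_tmul]
  rfl

lemma rmapA_id (z : BalTensor B M X) : rmapA B M A X X LinearMap.id z = z := by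
  induction z using BalTensor.induction_on with
  | h0 => rw [map_zero]
  | htmul m x => rw [rmapA_tmul]; rfl
  | hadd a b ha hb => rw [map_add, ha, hb]

lemma rmapA_comp (f : X →ₗ[B] X') (g : X' →ₗ[B] X'') (z : BalTensor B M X) :
    rmapA B M A X X'' (g.comp f) z = rmapA B M A X' X'' g (rmapA B M A X X' f z) := by
  induction z using BalTensor.induction_on with
  | h0 => rw [map_zero, map_zero, map_zero]
  | htmul m x => rw [rmapA_tmul, rmapA_tmul, rmapA_tmul]; rfl
  | hadd a b ha hb => rw [map_add, map_add, map_add, ha, hb]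

lemma rmapA_zero (z : BalTensor B M X) : rmapA B M A X X' 0 z = 0 := by
  induction z using BalTensor.induction_on with
  | h0 => rw [map_zero]
  | htmul m x => rw [rmapA_tmul, LinearMap.zero_apply, BalTensor.tmul_zero]
  | hadd a b ha hb => rw [map_add, ha, hb, add_zero]

lemma rmapA_add (f g : X →ₗ[B] X') (z : BalTensor B M X) :
    rmapA B M A X X' (f + g) z = rmapA B M A X X' f z + rmapA B M A X X' g z := by
  induction z using BalTensor.induction_on with
  | h0 => rw [map_zero, map_zero, map_zero, add_zero]
  | htmul m x => rw [rmapA_tmul, rmapA_tmul, rmapA_tmul, LinearMap.add_apply, BalTensor.tmul_add]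
  | hadd a b ha hb =>
      rw [map_add, map_add, map_add, ha, hb]
      abel

lemma rmapA_surjective (f : X →ₗ[B] X') (hf : Function.Surjective f) :
    Function.Surjective (rmapA B M A X X' f) := by
  intro z
  induction z using BalTensor.induction_on with
  | h0 => exact ⟨0, map_zero _⟩
  | htmul m x' =>
      obtain ⟨x, rfl⟩ := hf x'
      exact ⟨BalTensor.tmul B M X m x, rmapA_tmul B M A X X' f m x⟩
  | hadd a b ha hb =>
      obtain ⟨za, rfl⟩ := ha
      obtain ⟨zb, rfl⟩ := hb
      exact ⟨za + zb, map_add _ _ _⟩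

end RMapExtra

section LMap

variable (B : Type u) [Ring B]
  (M : Type u) [AddCommGroup M] [Module Bᵐᵒᵖ M]
  (M' : Type u) [AddCommGroup M'] [Module Bᵐᵒᵖ M']
  (M'' : Type u) [AddCommGroup M''] [Module Bᵐᵒᵖ M'']
  (N : Type u) [AddCommGroup N] [Module B N]
  (C : Type u) [Ring C] [Module Cᵐᵒᵖ N] [SMulCommClass B Cᵐᵒᵖ N]

/-- The auxiliary map on plain tensor products induced by a map in the first slot. -/
def lmapAux (f : M →ₗ[Bᵐᵒᵖ] M') : TensorProduct ℤ M N →ₗ[ℤ] TensorProduct ℤ M' N :=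
  LinearMap.rTensor N f.toAddMonoidHom.toIntLinearMap

lemma lmapAux_tmul (f : M →ₗ[Bᵐᵒᵖ] M') (m : M) (n : N) :
    lmapAux B M M' N f (m ⊗ₜ n) = (f m) ⊗ₜ n := by
  simp [lmapAux]

lemma lmapAux_rel (f : M →ₗ[Bᵐᵒᵖ] M') :
    balRel B M N ≤ (balRel B M' N).comap (lmapAux B M M' N f) := by
  rw [balRel, Submodule.span_le]
  rintro z ⟨b, m, n, rfl⟩
  simp only [SetLike.mem_coe, Submodule.mem_comap, map_sub, lmapAux_tmul]
  rw [LinearMap.map_smul]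
  exact Submodule.subset_span ⟨b, f m, n, rfl⟩

/-- The map `M ⊗_B N → M' ⊗_B N` induced in the first slot, as a `ℤ`-linear map. -/
def lmapQ (f : M →ₗ[Bᵐᵒᵖ] M') : BalTensor B M N →ₗ[ℤ] BalTensor B M' N :=
  Submodule.mapQ _ _ (lmapAux B M M' N f) (lmapAux_rel B M M' N f)

lemma lmapQ_mk (f : M →ₗ[Bᵐᵒᵖ] M') (z : TensorProduct ℤ M N) :
    lmapQ B M M' N f (BalTensor.mk B M N z) = BalTensor.mk B M' N (lmapAux B M M' N f z) :=
  rfl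

/-- The map `M ⊗_B N → M' ⊗_B N` induced in the first slot, as a right `C`-module map. -/
def lmapC (f : M →ₗ[Bᵐᵒᵖ] M') : BalTensor B M N →ₗ[Cᵐᵒᵖ] BalTensor B M' N where
  toFun := lmapQ B M M' N f
  map_add' := map_add _
  map_smul' := fun c z => by
    obtain ⟨w, rfl⟩ := BalTensor.mk_surjective B M N z
    simp only [RingHom.id_apply]
    rw [BalTensor.rsmul_mk, lmapQ_mk, lmapQ_mk, BalTensor.rsmul_mk]
    congr 1
    have h : (lmapAux B M M' N f).comp (rActAux M N C c)
        = (rActAux M' N C c).comp (lmapAux B M M' N f) := by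
      unfold lmapAux rActAux
      rw [LinearMap.rTensor_comp_lTensor, LinearMap.lTensor_comp_rTensor]
    exact DFunLike.congr_fun h w

lemma lmapC_tmul (f : M →ₗ[Bᵐᵒᵖ] M') (m : M) (n : N) :
    lmapC B M M' N C f (BalTensor.tmul B M N m n) = BalTensor.tmul B M' N (f m) n := by
  show lmapQ B M M' N f (BalTensor.mk B M N (m ⊗ₜ n)) = _
  rw [lmapQ_mk, lmapAux_tmul]
  rfl

lemma lmapC_id (z : BalTensor B M N) : lmapC B M M N C LinearMap.id z = z := by
  induction z using BalTensor.induction_on with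
  | h0 => rw [map_zero]
  | htmul m n => rw [lmapC_tmul]; rfl
  | hadd a b ha hb => rw [map_add, ha, hb]

lemma lmapC_comp (f : M →ₗ[Bᵐᵒᵖ] M') (g : M' →ₗ[Bᵐᵒᵖ] M'') (z : BalTensor B M N) :
    lmapC B M M'' N C (g.comp f) z = lmapC B M' M'' N C g (lmapC B M M' N C f z) := by
  induction z using BalTensor.induction_on with
  | h0 => rw [map_zero, map_zero, map_zero]
  | htmul m n => rw [lmapC_tmul, lmapC_tmul, lmapC_tmul]; rfl
  | hadd a b ha hb => rw [map_add, map_add, map_add, ha, hb]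

end LMap

section UnitR

variable (B : Type u) [Ring B] (M : Type u) [AddCommGroup M] [Module Bᵐᵒᵖ M]
  (A : Type u) [Ring A] [Module A M] [SMulCommClass A Bᵐᵒᵖ M]

/-- Auxiliary map `M ⊗ B → M`. -/
def unitRAux : TensorProduct ℤ M B →ₗ[ℤ] M :=
  TensorProduct.lift
    { toFun := fun m =>
        { toFun := fun b => op b • m
          map_add' := fun b b' => by
            show op (b + b') • m = op b • m + op b' • m
            rw [MulOpposite.op_add, add_smul]
          map_smul' := fun z b => by
            show op (z • b) • m = z • (op b • m)
            rw [MulOpposite.op_smul, smul_assoc] }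
      map_add' := fun m m' => by
        ext b
        simp [smul_add]
      map_smul' := fun z m => by
        ext b
        simp only [LinearMap.coe_mk, AddHom.coe_mk, RingHom.id_apply, LinearMap.smul_apply]
        exact smul_comm (op b) z m }

lemma unitRAux_tmul (m : M) (b : B) : unitRAux B M (m ⊗ₜ b) = op b • m := rfl

/-- The canonical map `M ⊗_B B → M`. -/
def unitRQ : BalTensor B M B →ₗ[ℤ] M :=
  Submodule.liftQ (balRel B M B) (unitRAux B M) (by
    rw [balRel, Submodule.span_le]
    rintro z ⟨b, m, x, rfl⟩
    simp only [SetLike.mem_coe, LinearMap.mem_ker, map_sub]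
    rw [unitRAux_tmul, unitRAux_tmul, smul_eq_mul, MulOpposite.op_mul, mul_smul, sub_self])

lemma unitRQ_tmul (m : M) (b : B) : unitRQ B M (BalTensor.tmul B M B m b) = op b • m := rfl

/-- The canonical isomorphism `M ⊗_B B ≅ M` of left `A`-modules. -/
def unitR : BalTensor B M B ≃ₗ[A] M where
  toFun := unitRQ B M
  map_add' := map_add _
  map_smul' := fun a z => by
    simp only [RingHom.id_apply]
    induction z using BalTensor.induction_on with
    | h0 => rw [smul_zero, map_zero, smul_zero]
    | htmul m x =>
        rw [BalTensor.lsmul_tmul, unitRQ_tmul, unitRQ_tmul]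
        exact (smul_comm a (op x) m).symm
    | hadd x y hx hy => rw [smul_add, map_add, map_add, hx, hy, smul_add]
  invFun := fun m => BalTensor.tmul B M B m 1
  left_inv := fun z => by
    show BalTensor.tmul B M B (unitRQ B M z) 1 = z
    induction z using BalTensor.induction_on with
    | h0 => rw [map_zero, BalTensor.zero_tmul]
    | htmul m x =>
        rw [unitRQ_tmul, BalTensor.balance, smul_eq_mul, mul_one]
    | hadd x y hx hy => rw [map_add, BalTensor.add_tmul, hx, hy]
  right_inv := fun m => by
    show unitRQ B M (BalTensor.tmul B M B m 1) = m
    rw [unitRQ_tmul, op_one, one_smul]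

lemma unitR_tmul (m : M) (b : B) :
    unitR B M A (BalTensor.tmul B M B m b) = op b • m := rfl

lemma unitR_symm_apply (m : M) :
    (unitR B M A).symm m = BalTensor.tmul B M B m 1 := rfl

/-- Finiteness of `M ⊗_B B` as a left `A`-module. -/
lemma balTensor_finite [Module.Finite A M] : Module.Finite A (BalTensor B M B) := by
  obtain ⟨n, s, hs⟩ := Module.Finite.exists_fin (R := A) (M := M)
  have key : ∀ m : M, BalTensor.tmul B M B m 1 ∈
      Submodule.span A (Set.range fun j => BalTensor.tmul B M B (s j) 1) := by
    intro m
    have hm : m ∈ Submodule.span A (Set.range s) := hs ▸ Submodule.mem_top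
    induction hm using Submodule.span_induction with
    | mem x hx =>
        obtain ⟨j, rfl⟩ := hx
        exact Submodule.subset_span ⟨j, rfl⟩
    | zero => rw [BalTensor.zero_tmul]; exact Submodule.zero_mem _
    | add x y _ _ hx hy => rw [BalTensor.add_tmul]; exact Submodule.add_mem _ hx hy
    | smul a x _ hx =>
        rw [← BalTensor.lsmul_tmul]
        exact Submodule.smul_mem _ a hx
  have main : ∀ z : BalTensor B M B,
      z ∈ Submodule.span A (Set.range fun j => BalTensor.tmul B M B (s j) 1) := by
    intro z
    induction z using BalTensor.induction_on with
    | h0 => exact Submodule.zero_mem _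
    | htmul m x =>
        have : BalTensor.tmul B M B m x = BalTensor.tmul B M B (op x • m) 1 := by
          rw [BalTensor.balance, smul_eq_mul, mul_one]
        rw [this]
        exact key _
    | hadd x y hx hy => exact Submodule.add_mem _ hx hy
  classical
  have hfg : (⊤ : Submodule A (BalTensor B M B)).FG := by
    refine ⟨Finset.univ.image fun j => BalTensor.tmul B M B (s j) 1, ?_⟩
    rw [Finset.coe_image, Finset.coe_univ, Set.image_univ]
    exact eq_top_iff.2 fun z _ => main z
  exact ⟨hfg⟩

end UnitR

section UnitL

variable (B : Type u) [Ring B] (N : Type u) [AddCommGroup N] [Module B N]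
  (C : Type u) [Ring C] [Module Cᵐᵒᵖ N] [SMulCommClass B Cᵐᵒᵖ N]

/-- Auxiliary map `B ⊗ N → N`. -/
def unitLAux : TensorProduct ℤ B N →ₗ[ℤ] N :=
  TensorProduct.lift
    { toFun := fun b =>
        { toFun := fun n => b • n
          map_add' := smul_add b
          map_smul' := fun z n => by
            simp only [RingHom.id_apply]
            exact smul_comm b z n }
      map_add' := fun b b' => by
        ext n
        simp [add_smul]
      map_smul' := fun z b => by
        ext n
        simp only [LinearMap.coe_mk, AddHom.coe_mk, RingHom.id_apply, LinearMap.smul_apply]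
        exact smul_assoc z b n }

lemma unitLAux_tmul (b : B) (n : N) : unitLAux B N (b ⊗ₜ n) = b • n := rfl

/-- The canonical map `B ⊗_B N → N`. -/
def unitLQ : BalTensor B B N →ₗ[ℤ] N :=
  Submodule.liftQ (balRel B B N) (unitLAux B N) (by
    rw [balRel, Submodule.span_le]
    rintro z ⟨b, x, n, rfl⟩
    simp only [SetLike.mem_coe, LinearMap.mem_ker, map_sub]
    rw [unitLAux_tmul, unitLAux_tmul, MulOpposite.smul_eq_mul_unop, MulOpposite.unop_op,
      mul_smul, sub_self])

lemma unitLQ_tmul (b : B) (n : N) : unitLQ B N (BalTensor.tmul B B N b n) = b • n := rfl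

/-- The canonical isomorphism `B ⊗_B N ≅ N` of right `C`-modules. -/
def unitL : BalTensor B B N ≃ₗ[Cᵐᵒᵖ] N where
  toFun := unitLQ B N
  map_add' := map_add _
  map_smul' := fun c z => by
    simp only [RingHom.id_apply]
    induction z using BalTensor.induction_on with
    | h0 => rw [smul_zero, map_zero, smul_zero]
    | htmul x n =>
        rw [BalTensor.rsmul_tmul, unitLQ_tmul, unitLQ_tmul]
        exact smul_comm x c n
    | hadd x y hx hy => rw [smul_add, map_add, map_add, hx, hy, smul_add]
  invFun := fun n => BalTensor.tmul B B N 1 n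
  left_inv := fun z => by
    show BalTensor.tmul B B N 1 (unitLQ B N z) = z
    induction z using BalTensor.induction_on with
    | h0 => rw [map_zero, BalTensor.tmul_zero]
    | htmul x n =>
        rw [unitLQ_tmul, ← BalTensor.balance]
        congr 1
        rw [MulOpposite.smul_eq_mul_unop, MulOpposite.unop_op, one_mul]
    | hadd x y hx hy => rw [map_add, BalTensor.tmul_add, hx, hy]
  right_inv := fun n => by
    show unitLQ B N (BalTensor.tmul B B N 1 n) = n
    rw [unitLQ_tmul, one_smul]

lemma unitL_tmul (b : B) (n : N) :
    unitL B N C (BalTensor.tmul B B N b n) = b • n := rfl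

/-- Forward map of `piIsoL`. -/
def piIsoLFwd (n : ℕ) : BalTensor B (Fin n → B) N →ₗ[Cᵐᵒᵖ] (Fin n → N) :=
  LinearMap.pi fun j => (unitL B N C).toLinearMap ∘ₗ lmapC B (Fin n → B) B N C (LinearMap.proj j)

lemma piIsoLFwd_apply (n : ℕ) (z : BalTensor B (Fin n → B) N) (j : Fin n) :
    piIsoLFwd B N C n z j = unitL B N C (lmapC B (Fin n → B) B N C (LinearMap.proj j) z) := rfl

lemma piIsoLInv_single_smul (n : ℕ) (c : B) (j : Fin n) :
    op c • (Pi.single j 1 : Fin n → B) = (Pi.single j c : Fin n → B) := by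
  classical
  funext i
  by_cases h : i = j
  · subst h; simp [MulOpposite.smul_eq_mul_unop]
  · simp [MulOpposite.smul_eq_mul_unop, Pi.single_apply, h]

/-- The canonical isomorphism `B^n ⊗_B N ≅ N^n` of right `C`-modules. -/
noncomputable def piIsoL (n : ℕ) : BalTensor B (Fin n → B) N ≃ₗ[Cᵐᵒᵖ] (Fin n → N) := by
  classical
  refine LinearEquiv.ofBijective (piIsoLFwd B N C n) (Function.bijective_iff_has_inverse.mpr
    ⟨fun v => ∑ j, BalTensor.tmul B (Fin n → B) N (Pi.single j 1) (v j), ?_, ?_⟩)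
  · intro z
    induction z using BalTensor.induction_on with
    | h0 =>
        rw [map_zero]
        simp [BalTensor.tmul_zero]
    | htmul x m =>
        have step : ∀ j : Fin n, BalTensor.tmul B (Fin n → B) N (Pi.single j 1)
            (piIsoLFwd B N C n (BalTensor.tmul B (Fin n → B) N x m) j)
            = BalTensor.tmul B (Fin n → B) N (Pi.single j (x j)) m := by
          intro j
          rw [piIsoLFwd_apply, lmapC_tmul, unitL_tmul, ← BalTensor.balance,
            piIsoLInv_single_smul]
          rfl
        calc (∑ j, BalTensor.tmul B (Fin n → B) N (Pi.single j 1)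
                (piIsoLFwd B N C n (BalTensor.tmul B (Fin n → B) N x m) j))
            = ∑ j, BalTensor.tmul B (Fin n → B) N (Pi.single j (x j)) m :=
              Finset.sum_congr rfl fun j _ => step j
          _ = BalTensor.tmul B (Fin n → B) N (∑ j, (Pi.single j (x j) : Fin n → B)) m :=
              (BalTensor.sum_tmul B (Fin n → B) N Finset.univ
                (fun j => (Pi.single j (x j) : Fin n → B)) m).symm
          _ = BalTensor.tmul B (Fin n → B) N x m := by rw [Finset.univ_sum_single]
    | hadd x y hx hy =>
        have hx' : ∑ j, BalTensor.tmul B (Fin n → B) N (Pi.single j 1)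
            (piIsoLFwd B N C n x j) = x := hx
        have hy' : ∑ j, BalTensor.tmul B (Fin n → B) N (Pi.single j 1)
            (piIsoLFwd B N C n y j) = y := hy
        rw [map_add]
        calc (∑ j, BalTensor.tmul B (Fin n → B) N (Pi.single j 1)
                ((piIsoLFwd B N C n x + piIsoLFwd B N C n y) j))
            = ∑ j, (BalTensor.tmul B (Fin n → B) N (Pi.single j 1) (piIsoLFwd B N C n x j)
                + BalTensor.tmul B (Fin n → B) N (Pi.single j 1) (piIsoLFwd B N C n y j)) :=
              Finset.sum_congr rfl fun j _ => by rw [Pi.add_apply, BalTensor.tmul_add]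
          _ = x + y := by rw [Finset.sum_add_distrib, hx', hy']
  · intro v
    have key : piIsoLFwd B N C n
        (∑ i, BalTensor.tmul B (Fin n → B) N (Pi.single i 1) (v i)) = v := by
      funext j
      rw [map_sum]
      have step : ∀ i : Fin n, piIsoLFwd B N C n
          (BalTensor.tmul B (Fin n → B) N (Pi.single i 1) (v i)) j
          = ((Pi.single i (1 : B) : Fin n → B) j) • v i := by
        intro i
        rw [piIsoLFwd_apply, lmapC_tmul, unitL_tmul]
        rfl
      calc (∑ i, piIsoLFwd B N C n (BalTensor.tmul B (Fin n → B) N (Pi.single i 1) (v i))) j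
          = ∑ i, piIsoLFwd B N C n (BalTensor.tmul B (Fin n → B) N (Pi.single i 1) (v i)) j :=
            by rw [Finset.sum_apply]
        _ = ∑ i, ((Pi.single i (1 : B) : Fin n → B) j) • v i := Finset.sum_congr rfl fun i _ => step i
        _ = v j := by
            rw [Finset.sum_eq_single j]
            · simp
            · intro i _ hij
              simp [Pi.single_apply, Ne.symm hij]
            · simp
    exact key

lemma piIsoL_apply (n : ℕ) (z : BalTensor B (Fin n → B) N) :
    piIsoL B N C n z = piIsoLFwd B N C n z := rfl

end UnitL

section AdjFacts

/-- Bundle a finite module into `FinModuleData`. -/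
abbrev FMD (R : Type u) [Ring R] (X : Type u) [AddCommGroup X] [Module R X]
    [Module.Finite R X] : FinModuleData R :=
  { X := X }

variable {A : Type u} [Ring A] {B : Type u} [Ring B]
  {M : Type u} [AddCommGroup M] [Module A M] [Module Bᵐᵒᵖ M] [SMulCommClass A Bᵐᵒᵖ M]
  {N : Type u} [AddCommGroup N] [Module B N] [Module Aᵐᵒᵖ N] [SMulCommClass B Aᵐᵒᵖ N]

variable (e : ∀ (X : FinModuleData B) (Y : FinModuleData A),
    (BalTensor B M X.X →ₗ[A] Y.X) ≃ (X.X →ₗ[B] BalTensor A N Y.X))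

variable (nat₁ : ∀ (X X' : FinModuleData B) (f : X.X →ₗ[B] X'.X) (Y : FinModuleData A)
    (h : BalTensor B M X'.X →ₗ[A] Y.X),
    e X Y (h.comp (rmapA B M A X.X X'.X f)) = (e X' Y h).comp f)

variable (nat₂ : ∀ (X : FinModuleData B) (Y Y' : FinModuleData A) (g : Y.X →ₗ[A] Y'.X)
    (h : BalTensor B M X.X →ₗ[A] Y.X),
    e X Y' (g.comp h) = (rmapA A N B Y.X Y'.X g).comp (e X Y h))

include nat₂ in
lemma adj_e_zero (X : FinModuleData B) (Y : FinModuleData A) : e X Y 0 = 0 := by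
  have h := nat₂ X Y Y 0 0
  rw [LinearMap.zero_comp] at h
  refine h.trans ?_
  ext x
  simp only [LinearMap.comp_apply, LinearMap.zero_apply]
  exact rmapA_zero A N B Y.X Y.X _

include nat₂ in
/-- The functor `N ⊗_A −` preserves injectivity of maps. -/
lemma adj_Gmono (Y Y' : FinModuleData A) (g : Y.X →ₗ[A] Y'.X) (hg : Function.Injective g) :
    Function.Injective (rmapA A N B Y.X Y'.X g) := by
  have hker : ∀ z : BalTensor A N Y.X, rmapA A N B Y.X Y'.X g z = 0 → z = 0 := by
    intro z hz
    have hu1 : LinearMap.toSpanSingleton B (BalTensor A N Y.X) z 1 = z := by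
      rw [LinearMap.toSpanSingleton_apply, one_smul]
    have h1 := nat₂ (FMD B B) Y Y' g
      ((e (FMD B B) Y).symm (LinearMap.toSpanSingleton B (BalTensor A N Y.X) z))
    rw [Equiv.apply_symm_apply] at h1
    have h2 : (rmapA A N B Y.X Y'.X g).comp
        (LinearMap.toSpanSingleton B (BalTensor A N Y.X) z) = 0 := by
      apply LinearMap.ext_ring
      simp only [LinearMap.comp_apply, LinearMap.zero_apply]
      rw [hu1]
      exact hz
    rw [h2] at h1
    have h3 : g.comp ((e (FMD B B) Y).symm
        (LinearMap.toSpanSingleton B (BalTensor A N Y.X) z)) = 0 :=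
      (e (FMD B B) Y').injective (by rw [h1, adj_e_zero e nat₂])
    have h4 : (e (FMD B B) Y).symm
        (LinearMap.toSpanSingleton B (BalTensor A N Y.X) z) = 0 := by
      ext w
      apply hg
      rw [← LinearMap.comp_apply, h3]
      simp
    have h5 : LinearMap.toSpanSingleton B (BalTensor A N Y.X) z = 0 := by
      have h6 := congrArg (e (FMD B B) Y) h4
      rwa [Equiv.apply_symm_apply, adj_e_zero e nat₂] at h6
    rw [← hu1, h5]
    simp
  intro z z' hzz
  have hsub : z - z' = 0 := hker _ (by rw [map_sub, hzz, sub_self])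
  exact sub_eq_zero.mp hsub

include nat₂ in
/-- An explicit splitting exhibiting `M` as a direct summand of a finite free
left `A`-module. -/
lemma adj_split_M [Module.Finite A M] :
    ∃ (n : ℕ) (σ : M →ₗ[A] (Fin n → A)) (π : (Fin n → A) →ₗ[A] M), ∀ m, π (σ m) = m := by
  obtain ⟨n, π, hπ⟩ := exists_free_cover (R := A) M
  obtain ⟨z, hz⟩ := rmapA_surjective A N B (Fin n → A) M π hπ
    (e (FMD B B) (FMD A M) (unitR B M A).toLinearMap 1)
  have hcomp : (rmapA A N B (Fin n → A) M π).comp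
      (LinearMap.toSpanSingleton B (BalTensor A N (Fin n → A)) z)
      = e (FMD B B) (FMD A M) (unitR B M A).toLinearMap := by
    apply LinearMap.ext_ring
    simp only [LinearMap.comp_apply, LinearMap.toSpanSingleton_apply, one_smul]
    exact hz
  have hnat := nat₂ (FMD B B) (FMD A (Fin n → A)) (FMD A M) π
    ((e (FMD B B) (FMD A (Fin n → A))).symm
      (LinearMap.toSpanSingleton B (BalTensor A N (Fin n → A)) z))
  rw [Equiv.apply_symm_apply, hcomp] at hnat
  have hps : π.comp ((e (FMD B B) (FMD A (Fin n → A))).symm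
      (LinearMap.toSpanSingleton B (BalTensor A N (Fin n → A)) z))
      = (unitR B M A).toLinearMap :=
    (e (FMD B B) (FMD A M)).injective hnat
  refine ⟨n, ((e (FMD B B) (FMD A (Fin n → A))).symm
    (LinearMap.toSpanSingleton B (BalTensor A N (Fin n → A)) z)).comp
    (unitR B M A).symm.toLinearMap, π, fun m => ?_⟩
  have h7 := LinearMap.congr_fun hps ((unitR B M A).symm m)
  simp only [LinearMap.comp_apply, LinearEquiv.coe_coe] at h7 ⊢
  rw [h7, LinearEquiv.apply_symm_apply]

include nat₂ in
lemma adj_e_add [Module.Finite A M] (Y : FinModuleData A)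
    (g g' : BalTensor B M B →ₗ[A] Y.X) :
    e (FMD B B) Y (g + g') = e (FMD B B) Y g + e (FMD B B) Y g' := by
  haveI : Module.Finite A (BalTensor B M B) := balTensor_finite B M A
  have key : ∀ g0 : BalTensor B M B →ₗ[A] Y.X,
      e (FMD B B) Y g0 = (rmapA A N B (BalTensor B M B) Y.X g0).comp
        (e (FMD B B) (FMD A (BalTensor B M B)) LinearMap.id) := by
    intro g0
    have h := nat₂ (FMD B B) (FMD A (BalTensor B M B)) Y g0 LinearMap.id
    rwa [LinearMap.comp_id] at h
  rw [key (g + g'), key g, key g']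
  ext x
  simp only [LinearMap.comp_apply, LinearMap.add_apply]
  exact rmapA_add A N B (BalTensor B M B) Y.X g g' _

include nat₂ in
lemma adj_esymm_add [Module.Finite A M] (Y : FinModuleData A)
    (t t' : B →ₗ[B] BalTensor A N Y.X) :
    (e (FMD B B) Y).symm (t + t') = (e (FMD B B) Y).symm t + (e (FMD B B) Y).symm t' := by
  apply (e (FMD B B) Y).injective
  rw [Equiv.apply_symm_apply, adj_e_add e nat₂, Equiv.apply_symm_apply,
    Equiv.apply_symm_apply]

include nat₁ nat₂ in
/-- The Baer-criterion argument: `N ⊗_A Y` is an injective left `B`-module whenever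
`Y` is an injective left `A`-module. -/
lemma adj_crux
    (Fmono : ∀ (X X' : FinModuleData B) (f : X.X →ₗ[B] X'.X), Function.Injective f →
      Function.Injective (rmapA B M A X.X X'.X f))
    [IsNoetherian B B]
    (Y : Type u) [AddCommGroup Y] [Module A Y] [Module.Finite A Y]
    (hY : Module.Injective A Y) : Module.Injective B (BalTensor A N Y) := by
  apply Module.Baer.injective
  intro I g
  haveI : Module.Finite B I := Module.Finite.iff_fg.mpr (IsNoetherian.noetherian I)
  have hι : Function.Injective (rmapA B M A I B I.subtype) :=
    Fmono (FMD B I) (FMD B B) I.subtype I.injective_subtype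
  obtain ⟨ψ, hψ⟩ := hY.out (rmapA B M A I B I.subtype) hι ((e (FMD B I) (FMD A Y)).symm g)
  have hcomp : ψ.comp (rmapA B M A I B I.subtype) = (e (FMD B I) (FMD A Y)).symm g :=
    LinearMap.ext hψ
  have hnat := nat₁ (FMD B I) (FMD B B) I.subtype (FMD A Y) ψ
  rw [hcomp, Equiv.apply_symm_apply] at hnat
  refine ⟨e (FMD B B) (FMD A Y) ψ, fun x hx => ?_⟩
  exact (LinearMap.congr_fun hnat ⟨x, hx⟩).symm

include nat₁ nat₂ in
/-- The bimodule-compatible bijection `N ≅ Hom_A(M, A)` coming from the adjunction. -/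
lemma adj_theta [Module.Finite A M] :
    ∃ Θ : N → (M →ₗ[A] A), Function.Bijective Θ ∧
      (∀ n1 n2, Θ (n1 + n2) = Θ n1 + Θ n2) ∧
      (∀ (a : A) (nn : N) (m : M), Θ (op a • nn) m = Θ nn m * a) ∧
      (∀ (b : B) (nn : N) (m : M), Θ (b • nn) m = Θ nn (op b • m)) := by
  haveI : Module.Finite A (BalTensor B M B) := balTensor_finite B M A
  set u : N → (B →ₗ[B] BalTensor A N A) :=
    fun nn => LinearMap.toSpanSingleton B (BalTensor A N A) ((unitR A N B).symm nn) with hu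
  have u1 : ∀ nn, u nn 1 = (unitR A N B).symm nn := fun nn => by
    rw [hu, LinearMap.toSpanSingleton_apply, one_smul]
  set Θ : N → (M →ₗ[A] A) :=
    fun nn => ((e (FMD B B) (FMD A A)).symm (u nn)).comp (unitR B M A).symm.toLinearMap
    with hΘ
  have Θ_apply : ∀ nn m, Θ nn m
      = ((e (FMD B B) (FMD A A)).symm (u nn)) ((unitR B M A).symm m) := fun nn m => rfl
  have βM_r : ∀ (b : B) (w : BalTensor B M B),
      unitR B M A (rmapA B M A B B (LinearMap.toSpanSingleton B B b) w)
        = op b • unitR B M A w := by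
    intro b w
    induction w using BalTensor.induction_on with
    | h0 => simp only [map_zero, smul_zero]
    | htmul m x =>
        rw [rmapA_tmul]
        show unitR B M A (BalTensor.tmul B M B m ((LinearMap.toSpanSingleton B B b) x))
          = op b • unitR B M A (BalTensor.tmul B M B m x)
        rw [LinearMap.toSpanSingleton_apply, smul_eq_mul, unitR_tmul, unitR_tmul,
          MulOpposite.op_mul, mul_smul]
    | hadd p q hp hq => rw [map_add, map_add, map_add, hp, hq, smul_add]
  have βN_r : ∀ (a : A) (w : BalTensor A N A),
      unitR A N B (rmapA A N B A A (LinearMap.toSpanSingleton A A a) w)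
        = op a • unitR A N B w := by
    intro a w
    induction w using BalTensor.induction_on with
    | h0 => simp only [map_zero, smul_zero]
    | htmul nn x =>
        rw [rmapA_tmul]
        show unitR A N B (BalTensor.tmul A N A nn ((LinearMap.toSpanSingleton A A a) x))
          = op a • unitR A N B (BalTensor.tmul A N A nn x)
        rw [LinearMap.toSpanSingleton_apply, smul_eq_mul, unitR_tmul, unitR_tmul,
          MulOpposite.op_mul, mul_smul]
    | hadd p q hp hq => rw [map_add, map_add, map_add, hp, hq, smul_add]
  have βN_symm_r : ∀ (a : A) (nn : N),
      (unitR A N B).symm (op a • nn)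
        = rmapA A N B A A (LinearMap.toSpanSingleton A A a) ((unitR A N B).symm nn) := by
    intro a nn
    apply (unitR A N B).injective
    rw [LinearEquiv.apply_symm_apply, βN_r, LinearEquiv.apply_symm_apply]
  have βM_symm_r : ∀ (b : B) (m : M),
      (unitR B M A).symm (op b • m)
        = rmapA B M A B B (LinearMap.toSpanSingleton B B b) ((unitR B M A).symm m) := by
    intro b m
    apply (unitR B M A).injective
    rw [LinearEquiv.apply_symm_apply, βM_r, LinearEquiv.apply_symm_apply]
  have Θinj : Function.Injective Θ := by
    intro n1 n2 h
    have h1 : (e (FMD B B) (FMD A A)).symm (u n1)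
        = (e (FMD B B) (FMD A A)).symm (u n2) := by
      ext w
      have h2 := LinearMap.congr_fun h (unitR B M A w)
      rw [Θ_apply, Θ_apply, LinearEquiv.symm_apply_apply] at h2
      exact h2
    have h3 : u n1 = u n2 := (e (FMD B B) (FMD A A)).symm.injective h1
    have h4 := congrArg (fun (t : B →ₗ[B] BalTensor A N A) => t 1) h3
    simp only [u1] at h4
    exact (unitR A N B).symm.injective h4
  have Θsurj : Function.Surjective Θ := by
    intro φ
    refine ⟨unitR A N B ((e (FMD B B) (FMD A A))
      (φ.comp (unitR B M A).toLinearMap) 1), ?_⟩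
    have hu' : u (unitR A N B ((e (FMD B B) (FMD A A))
        (φ.comp (unitR B M A).toLinearMap) 1))
        = (e (FMD B B) (FMD A A)) (φ.comp (unitR B M A).toLinearMap) := by
      apply LinearMap.ext_ring
      rw [u1, LinearEquiv.symm_apply_apply]
    apply LinearMap.ext
    intro m
    rw [Θ_apply, hu', Equiv.symm_apply_apply]
    simp only [LinearMap.comp_apply, LinearEquiv.coe_coe]
    rw [LinearEquiv.apply_symm_apply]
  have Θadd : ∀ n1 n2, Θ (n1 + n2) = Θ n1 + Θ n2 := by
    intro n1 n2
    have hu2 : u (n1 + n2) = u n1 + u n2 := by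
      apply LinearMap.ext_ring
      simp only [LinearMap.add_apply]
      rw [u1, u1, u1, map_add]
    apply LinearMap.ext
    intro m
    rw [Θ_apply, hu2, adj_esymm_add e nat₂]
    simp only [LinearMap.add_apply]
    rw [Θ_apply, Θ_apply]
  have Θa : ∀ (a : A) (nn : N) (m : M), Θ (op a • nn) m = Θ nn m * a := by
    intro a nn m
    have hu3 : u (op a • nn) = (rmapA A N B A A (LinearMap.toSpanSingleton A A a)).comp
        (u nn) := by
      apply LinearMap.ext_ring
      simp only [LinearMap.comp_apply]
      rw [u1, u1, βN_symm_r]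
    have hnat : (e (FMD B B) (FMD A A)).symm (u (op a • nn))
        = (LinearMap.toSpanSingleton A A a).comp ((e (FMD B B) (FMD A A)).symm (u nn)) := by
      apply (e (FMD B B) (FMD A A)).injective
      rw [Equiv.apply_symm_apply, hu3]
      have h8 := nat₂ (FMD B B) (FMD A A) (FMD A A) (LinearMap.toSpanSingleton A A a)
        ((e (FMD B B) (FMD A A)).symm (u nn))
      rw [Equiv.apply_symm_apply] at h8
      rw [h8]
    rw [Θ_apply, hnat]
    simp only [LinearMap.comp_apply, LinearMap.toSpanSingleton_apply, smul_eq_mul]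
    rw [Θ_apply]
  have Θb : ∀ (b : B) (nn : N) (m : M), Θ (b • nn) m = Θ nn (op b • m) := by
    intro b nn m
    have hu4 : u (b • nn) = (u nn).comp (LinearMap.toSpanSingleton B B b) := by
      apply LinearMap.ext_ring
      simp only [hu, LinearMap.comp_apply, LinearMap.toSpanSingleton_apply, one_smul]
      exact (unitR A N B).symm.map_smul b nn
    have hnat : (e (FMD B B) (FMD A A)).symm (u (b • nn))
        = ((e (FMD B B) (FMD A A)).symm (u nn)).comp
          (rmapA B M A B B (LinearMap.toSpanSingleton B B b)) := by
      apply (e (FMD B B) (FMD A A)).injective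
      rw [Equiv.apply_symm_apply, hu4]
      have h9 := nat₁ (FMD B B) (FMD B B) (LinearMap.toSpanSingleton B B b) (FMD A A)
        ((e (FMD B B) (FMD A A)).symm (u nn))
      rw [Equiv.apply_symm_apply] at h9
      rw [h9]
    rw [Θ_apply, hnat]
    simp only [LinearMap.comp_apply]
    rw [Θ_apply, βM_symm_r]
  exact ⟨Θ, ⟨Θinj, Θsurj⟩, Θadd, Θa, Θb⟩

include nat₁ nat₂ in
/-- An explicit splitting exhibiting `N` as a direct summand of a finite free
right `A`-module. -/
lemma adj_split_N_right [Module.Finite A M] :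
    ∃ (n : ℕ) (i : N →ₗ[Aᵐᵒᵖ] (Fin n → A)) (p : (Fin n → A) →ₗ[Aᵐᵒᵖ] N),
      ∀ x, p (i x) = x := by
  classical
  obtain ⟨n, σ, π, hsplit⟩ := adj_split_M e nat₂
  obtain ⟨Θ, hΘbij, hΘadd, hΘa, hΘb⟩ := adj_theta e nat₁ nat₂
  let Θinv : (M →ₗ[A] A) → N := fun φ => (Equiv.ofBijective Θ hΘbij).symm φ
  have hΘinv : ∀ φ, Θ (Θinv φ) = φ := fun φ => (Equiv.ofBijective Θ hΘbij).apply_symm_apply φ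
  let ψ : (Fin n → A) → (M →ₗ[A] A) := fun v =>
    { toFun := fun m => ∑ j, σ m j * v j
      map_add' := fun m m' => by
        simp only [map_add, Pi.add_apply, add_mul]
        rw [Finset.sum_add_distrib]
      map_smul' := fun a m => by
        simp only [map_smul, RingHom.id_apply, Pi.smul_apply, smul_eq_mul]
        rw [Finset.mul_sum]
        exact Finset.sum_congr rfl fun j _ => by rw [mul_assoc] }
  have ψ_apply : ∀ v m, ψ v m = ∑ j, σ m j * v j := fun _ _ => rfl
  have hψadd : ∀ v v', ψ (v + v') = ψ v + ψ v' := by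
    intro v v'
    apply LinearMap.ext
    intro m
    rw [LinearMap.add_apply, ψ_apply, ψ_apply, ψ_apply, ← Finset.sum_add_distrib]
    exact Finset.sum_congr rfl fun j _ => by rw [Pi.add_apply, mul_add]
  have hψa : ∀ (c : Aᵐᵒᵖ) (v : Fin n → A) (m : M), ψ (c • v) m = ψ v m * c.unop := by
    intro c v m
    rw [ψ_apply, ψ_apply, Finset.sum_mul]
    exact Finset.sum_congr rfl fun j _ => by
      rw [Pi.smul_apply, MulOpposite.smul_eq_mul_unop, mul_assoc]
  have hΘinv_add : ∀ φ φ', Θinv (φ + φ') = Θinv φ + Θinv φ' := by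
    intro φ φ'
    apply hΘbij.injective
    rw [hΘinv, hΘadd, hΘinv, hΘinv]
  refine ⟨n,
    { toFun := fun nn j => Θ nn (π (Pi.single j 1))
      map_add' := fun n1 n2 => by
        funext j
        show Θ (n1 + n2) (π (Pi.single j 1)) = _
        rw [hΘadd]
        rfl
      map_smul' := fun c nn => by
        funext j
        show Θ (c • nn) (π (Pi.single j 1)) = (c • fun j => Θ nn (π (Pi.single j 1))) j
        rw [Pi.smul_apply, MulOpposite.smul_eq_mul_unop]
        have h10 := hΘa c.unop nn (π (Pi.single j 1))
        rw [MulOpposite.op_unop] at h10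
        exact h10 },
    { toFun := fun v => Θinv (ψ v)
      map_add' := fun v v' => by
        show Θinv (ψ (v + v')) = Θinv (ψ v) + Θinv (ψ v')
        rw [hψadd, hΘinv_add]
      map_smul' := fun c v => by
        show Θinv (ψ (c • v)) = c • Θinv (ψ v)
        apply hΘbij.injective
        rw [hΘinv]
        apply LinearMap.ext
        intro m
        have h11 : c • Θinv (ψ v) = op c.unop • Θinv (ψ v) := by
          rw [MulOpposite.op_unop]
        rw [h11, hΘa, hΘinv, hψa] },
    fun nn => ?_⟩
  show Θinv (ψ (fun j => Θ nn (π (Pi.single j 1)))) = nn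
  apply hΘbij.injective
  rw [hΘinv]
  apply LinearMap.ext
  intro m
  rw [ψ_apply]
  have expand : ∀ j : Fin n, σ m j * Θ nn (π (Pi.single j 1))
      = Θ nn (σ m j • π (Pi.single j 1)) := by
    intro j
    rw [map_smul, smul_eq_mul]
  have hsingle : ∀ j : Fin n, σ m j • π (Pi.single j 1) = π (Pi.single j (σ m j)) := by
    intro j
    rw [← map_smul]
    congr 1
    funext i
    by_cases hij : i = j
    · subst hij; simp
    · simp [Pi.single_apply, hij]
  calc ∑ j, σ m j * Θ nn (π (Pi.single j 1))
      = ∑ j, Θ nn (σ m j • π (Pi.single j 1)) := Finset.sum_congr rfl fun j _ => expand j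
    _ = ∑ j, Θ nn (π (Pi.single j (σ m j))) := Finset.sum_congr rfl fun j _ => by
        rw [hsingle]
    _ = Θ nn (π (∑ j, (Pi.single j (σ m j) : Fin n → A))) := by
        rw [map_sum, map_sum]
    _ = Θ nn (π (σ m)) := by rw [Finset.univ_sum_single]
    _ = Θ nn m := by rw [hsplit]

end AdjFacts

section Symm

variable (k : Type u) [Field k] (A : Type u) [Ring A] [Algebra k A]

/-- The dual `Hom_k(A,k)` is an injective left `A`-module. -/
lemma dualA_injective : Module.Injective A (A →ₗ[k] k) := by
  apply Module.Baer.injective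
  intro I g
  let p : Submodule k A := Submodule.restrictScalars k I
  let g1 : p →ₗ[k] k :=
    { toFun := fun x => g ⟨x.1, x.2⟩ 1
      map_add' := fun x y => by
        have h0 : (⟨(x + y).1, (x + y).2⟩ : I) = ⟨x.1, x.2⟩ + ⟨y.1, y.2⟩ := rfl
        show g ⟨(x + y).1, (x + y).2⟩ 1 = g ⟨x.1, x.2⟩ 1 + g ⟨y.1, y.2⟩ 1
        rw [h0, map_add]
        rfl
      map_smul' := fun c x => by
        simp only [RingHom.id_apply]
        show g ⟨(c • x).1, (c • x).2⟩ 1 = c • g ⟨x.1, x.2⟩ 1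
        have h1 : (⟨(c • x).1, (c • x).2⟩ : I) = (algebraMap k A c) • ⟨x.1, x.2⟩ := by
          apply Subtype.ext
          show c • x.1 = _
          rw [Submodule.coe_smul_of_tower, algebraMap_smul]
        rw [h1, map_smul, dual_lsmul_apply, one_mul, Algebra.algebraMap_eq_smul_one,
          map_smul]
         }
  obtain ⟨q, hq⟩ := Submodule.exists_isCompl p
  let g2 : A →ₗ[k] k := g1 ∘ₗ (p.linearProjOfIsCompl q hq)
  have hg2 : ∀ (x : A) (hx : x ∈ I), g2 x = g ⟨x, hx⟩ 1 := by
    intro x hx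
    have hxp : x ∈ p := (Submodule.restrictScalars_mem k I x).mpr hx
    have h2 : p.linearProjOfIsCompl q hq x = ⟨x, hxp⟩ :=
      Submodule.linearProjOfIsCompl_apply_left hq ⟨x, hxp⟩
    show g1 (p.linearProjOfIsCompl q hq x) = g ⟨x, hx⟩ 1
    rw [h2]
    rfl
  let g' : A →ₗ[A] (A →ₗ[k] k) :=
    { toFun := fun a =>
        { toFun := fun x => g2 (x * a)
          map_add' := fun x y => by
            show g2 ((x + y) * a) = g2 (x * a) + g2 (y * a)
            rw [add_mul, map_add]
          map_smul' := fun c x => by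
            show g2 ((c • x) * a) = c • g2 (x * a)
            rw [smul_mul_assoc, map_smul] }
      map_add' := fun a a' => by
        apply LinearMap.ext
        intro x
        show g2 (x * (a + a')) = g2 (x * a) + g2 (x * a')
        rw [mul_add, map_add]
      map_smul' := fun a' a => by
        apply LinearMap.ext
        intro x
        rw [RingHom.id_apply, dual_lsmul_apply]
        show g2 (x * (a' • a)) = g2 ((x * a') * a)
        rw [smul_eq_mul, mul_assoc] }
  refine ⟨g', fun x hx => ?_⟩
  apply LinearMap.ext
  intro y
  show g2 (y * x) = g ⟨x, hx⟩ y
  have hyx : y * x ∈ I := I.mul_mem_left y hx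
  rw [hg2 (y * x) hyx]
  have h3 : (⟨y * x, hyx⟩ : I) = y • ⟨x, hx⟩ := rfl
  rw [h3, map_smul, dual_lsmul_apply, one_mul]

/-- A symmetric algebra is self-injective on the left. -/
lemma symm_self_injective (hsymm : IsSymmetricAlgebra k A) : Module.Injective A A := by
  obtain ⟨s, hs, hbij⟩ := hsymm
  let sl : A →ₗ[A] (A →ₗ[k] k) :=
    { toFun := s
      map_add' := hs.map_add
      map_smul' := fun a x => by rw [RingHom.id_apply]; exact hs.map_lsmul a x }
  let sE := LinearEquiv.ofBijective sl hbij
  exact injective_of_retract sE.toLinearMap sE.symm.toLinearMap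
    (fun z => sE.symm_apply_apply z) (dualA_injective k A)

end Symm

section DualSide

variable (k : Type u) [Field k] (B : Type u) [Ring B] [Algebra k B]
variable (X : Type u) [AddCommGroup X] [Module k X] [Module Bᵐᵒᵖ X] [IsScalarTower k Bᵐᵒᵖ X]

/-- The left `B`-module structure on `Hom_k(X, k)` for a right `B`-module `X`. -/
def dualLMod : Module B (X →ₗ[k] k) where
  smul b f :=
    { toFun := fun x => f (op b • x)
      map_add' := fun x y => by
        show f (op b • (x + y)) = f (op b • x) + f (op b • y)
        rw [smul_add, map_add]
      map_smul' := fun c x => by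
        show f (op b • c • x) = c • f (op b • x)
        rw [smul_comm, map_smul] }
  one_smul f := LinearMap.ext fun x => by
    show f (op 1 • x) = f x
    rw [op_one, one_smul]
  mul_smul b b' f := LinearMap.ext fun x => by
    show f (op (b * b') • x) = f (op b' • op b • x)
    rw [MulOpposite.op_mul, mul_smul]
  smul_zero b := LinearMap.ext fun x => rfl
  smul_add b f f' := LinearMap.ext fun x => rfl
  add_smul b b' f := LinearMap.ext fun x => by
    show f (op (b + b') • x) = f (op b • x) + f (op b' • x)
    rw [MulOpposite.op_add, add_smul, map_add]
  zero_smul f := LinearMap.ext fun x => by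
    show f (op (0 : B) • x) = 0
    rw [MulOpposite.op_zero, zero_smul, map_zero]

/-- Baer's criterion via duality: if the `k`-dual of a right `B`-module `X` is a
direct summand of a finite free left `B`-module, then `X` is injective. -/
lemma right_baer [FiniteDimensional k X]
    [instDX : Module B (X →ₗ[k] k)]
    (hsm : ∀ (b : B) (f : X →ₗ[k] k) (x : X), (b • f) x = f (op b • x))
    {n : ℕ} (σ : (X →ₗ[k] k) →ₗ[B] (Fin n → B)) (π : (Fin n → B) →ₗ[B] (X →ₗ[k] k))
    (hπσ : ∀ f, π (σ f) = f) : Module.Injective Bᵐᵒᵖ X := by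
  apply Module.Baer.injective
  intro I g
  letI instDI : Module B ((I : Type u) →ₗ[k] k) := dualLMod k B I
  letI instDB : Module B (Bᵐᵒᵖ →ₗ[k] k) := dualLMod k B Bᵐᵒᵖ
  let inclk : (I : Type u) →ₗ[k] Bᵐᵒᵖ :=
    { toFun := fun x => x.1
      map_add' := fun x y => rfl
      map_smul' := fun c x => rfl }
  let β : (Bᵐᵒᵖ →ₗ[k] k) →ₗ[B] ((I : Type u) →ₗ[k] k) :=
    { toFun := fun F => F ∘ₗ inclk
      map_add' := fun F F' => rfl
      map_smul' := fun b F => by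
        simp only [RingHom.id_apply]
        apply LinearMap.ext
        intro x
        show F (op b • (x : Bᵐᵒᵖ)) = F ((op b • x : I) : Bᵐᵒᵖ)
        rfl }
  have hβsurj : Function.Surjective β := by
    intro f
    obtain ⟨q, hq⟩ := Submodule.exists_isCompl (Submodule.restrictScalars k I)
    let castI : (Submodule.restrictScalars k I : Submodule k Bᵐᵒᵖ) →ₗ[k] (I : Type u) :=
      { toFun := fun x => ⟨x.1, (Submodule.restrictScalars_mem k I x.1).mp x.2⟩
        map_add' := fun x y => rfl
        map_smul' := fun c x => rfl }
    refine ⟨(f ∘ₗ castI) ∘ₗ (Submodule.restrictScalars k I).linearProjOfIsCompl q hq, ?_⟩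
    apply LinearMap.ext
    intro x
    have hx : (x : Bᵐᵒᵖ) ∈ Submodule.restrictScalars k I :=
      (Submodule.restrictScalars_mem k I x.1).mpr x.2
    show f (castI ((Submodule.restrictScalars k I).linearProjOfIsCompl q hq (x : Bᵐᵒᵖ))) = f x
    have h2 : (Submodule.restrictScalars k I).linearProjOfIsCompl q hq (x : Bᵐᵒᵖ)
        = ⟨x.1, hx⟩ := Submodule.linearProjOfIsCompl_apply_left hq ⟨x.1, hx⟩
    rw [h2]
    rfl
  let gk : (I : Type u) →ₗ[k] X :=
    { toFun := g
      map_add' := g.map_add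
      map_smul' := fun c x => by
        simp only [RingHom.id_apply]
        have h1 : (c • x : I) = (algebraMap k Bᵐᵒᵖ c) • x := by
          apply Subtype.ext
          show c • (x : Bᵐᵒᵖ) = _
          rw [Submodule.coe_smul_of_tower, algebraMap_smul]
        rw [h1, map_smul, algebraMap_smul]
    }
  let γ : (X →ₗ[k] k) →ₗ[B] ((I : Type u) →ₗ[k] k) :=
    { toFun := fun f => f ∘ₗ gk
      map_add' := fun f f' => rfl
      map_smul' := fun b f => by
        simp only [RingHom.id_apply]
        apply LinearMap.ext
        intro x
        have h2 : ((b • f) ∘ₗ gk) x = f (op b • g x) := hsm b f (g x)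
        have h3 : (b • (f ∘ₗ gk)) x = f (g (op b • x)) := rfl
        rw [h2, h3, LinearMap.map_smul] }
  obtain ⟨δ, hδ⟩ := lift_of_split (R := B) σ π hπσ β hβsurj γ
  have hev : ∀ (w : X) (f0 : Module.Dual k X), Module.evalEquiv k X w f0 = f0 w :=
    fun w f0 => by rw [Module.evalEquiv_apply, Module.Dual.eval_apply]
  have hksmul : ∀ (c : k) (f : X →ₗ[k] k), (algebraMap k B c) • f = c • f := by
    intro c f
    apply LinearMap.ext
    intro x
    rw [hsm]
    have h4 : op (algebraMap k B c) • x = c • x := by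
      rw [← MulOpposite.algebraMap_apply, algebraMap_smul]
    rw [h4, map_smul]
    rfl
  let Λ : Bᵐᵒᵖ → (Module.Dual k (Module.Dual k X)) := fun x =>
    { toFun := fun f => δ f x
      map_add' := fun f f' => by
        show δ (f + f') x = δ f x + δ f' x
        rw [map_add]
        rfl
      map_smul' := fun c f => by
        show δ (c • f) x = c • δ f x
        rw [← hksmul, LinearMap.map_smul]
        show δ f (op (algebraMap k B c) • x) = c • δ f x
        have h5 : op (algebraMap k B c) • x = c • x := by
          rw [← MulOpposite.algebraMap_apply, algebraMap_smul]
        rw [h5, map_smul] }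
  let h' : Bᵐᵒᵖ →ₗ[Bᵐᵒᵖ] X :=
    { toFun := fun x => (Module.evalEquiv k X).symm (Λ x)
      map_add' := fun x y => by
        show (Module.evalEquiv k X).symm (Λ (x + y)) = _
        rw [← map_add]
        congr 1
        apply LinearMap.ext
        intro f
        show δ f (x + y) = δ f x + δ f y
        rw [map_add]
      map_smul' := fun y x => by
        show (Module.evalEquiv k X).symm (Λ (y • x)) = _
        rw [RingHom.id_apply]
        apply (Module.evalEquiv k X).injective
        rw [LinearEquiv.apply_symm_apply]
        apply LinearMap.ext
        intro f
        have e1 : Module.evalEquiv k X (y • (Module.evalEquiv k X).symm (Λ x)) f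
            = f (y • (Module.evalEquiv k X).symm (Λ x)) := hev _ f
        have e2 : f (y • (Module.evalEquiv k X).symm (Λ x))
            = (y.unop • f) ((Module.evalEquiv k X).symm (Λ x)) := by
          rw [hsm, MulOpposite.op_unop]
        have e3 : (y.unop • f) ((Module.evalEquiv k X).symm (Λ x))
            = Λ x (y.unop • f) := by
          rw [← hev ((Module.evalEquiv k X).symm (Λ x)) (y.unop • f),
            LinearEquiv.apply_symm_apply]
        have e4 : Λ x (y.unop • f) = δ f (y • x) := by
          show δ (y.unop • f) x = δ f (y • x)
          rw [LinearMap.map_smul]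
          show δ f (op y.unop • x) = δ f (y • x)
          rw [MulOpposite.op_unop]
        rw [e1, e2, e3, e4]
        rfl }
  refine ⟨h', fun x mem => ?_⟩
  apply (Module.evalEquiv k X).injective
  show Module.evalEquiv k X ((Module.evalEquiv k X).symm (Λ x)) = _
  rw [LinearEquiv.apply_symm_apply]
  apply LinearMap.ext
  intro f
  have e7 : Module.evalEquiv k X (g ⟨x, mem⟩) f = f (g ⟨x, mem⟩) := hev _ f
  rw [e7]
  exact LinearMap.congr_fun (hδ f) ⟨x, mem⟩

end DualSide

/-- Suppose `N ⊗_A M ≅ B ⊕ Q` as `B`-`B`-bimodules with `Q` projective as a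
left and as a right `B`-module, and suppose the functors `M ⊗_B −` and `N ⊗_A −` are
biadjoint. If `A` is symmetric, then `B` is self-injective. -/
theorem stmt8 (k A B M N Q : Type u) [Field k]
    [Ring A] [Algebra k A] [FiniteDimensional k A]
    [Ring B] [Algebra k B] [FiniteDimensional k B]
    [AddCommGroup M] [Module k M] [Module A M] [Module Bᵐᵒᵖ M]
    [SMulCommClass A Bᵐᵒᵖ M] [IsScalarTower k A M] [IsScalarTower k Bᵐᵒᵖ M]
    [FiniteDimensional k M]
    [AddCommGroup N] [Module k N] [Module B N] [Module Aᵐᵒᵖ N]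
    [SMulCommClass B Aᵐᵒᵖ N] [IsScalarTower k B N] [IsScalarTower k Aᵐᵒᵖ N]
    [FiniteDimensional k N]
    [AddCommGroup Q] [Module k Q] [Module B Q] [Module Bᵐᵒᵖ Q]
    [SMulCommClass B Bᵐᵒᵖ Q] [IsScalarTower k B Q] [IsScalarTower k Bᵐᵒᵖ Q]
    [FiniteDimensional k Q]
    (hQl : Module.Projective B Q) (hQr : Module.Projective Bᵐᵒᵖ Q)
    (hiso : ∃ e : BalTensor A N M → B × Q,
      IsBimodHom B B (BalTensor A N M) (B × Q) e ∧ Function.Bijective e)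
    (hadj₁ : TensorAdjunction A B M N) (hadj₂ : TensorAdjunction B A N M)
    (hsymm : IsSymmetricAlgebra k A) :
    Module.Injective B B ∧ Module.Injective Bᵐᵒᵖ B := by
  classical
  obtain ⟨e₁, nat₁₁, nat₁₂⟩ := hadj₁
  obtain ⟨e₂, nat₂₁, nat₂₂⟩ := hadj₂
  obtain ⟨ebi, hbi, hbij⟩ := hiso
  haveI : IsNoetherian B B := isNoetherian_of_tower k inferInstance
  haveI : Module.Finite A M := Module.Finite.of_restrictScalars_finite k A M
  haveI : Module.Finite B N := Module.Finite.of_restrictScalars_finite k B N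
  -- the bimodule isomorphism `N ⊗ M ≅ B ⊕ Q` as left and right linear equivalences
  let eL : BalTensor A N M ≃ₗ[B] (B × Q) :=
    LinearEquiv.ofBijective
      { toFun := ebi
        map_add' := fun x y => hbi.map_add x y
        map_smul' := fun b z => by rw [RingHom.id_apply]; exact hbi.map_lsmul b z } hbij
  let eR : BalTensor A N M ≃ₗ[Bᵐᵒᵖ] (B × Q) :=
    LinearEquiv.ofBijective
      { toFun := ebi
        map_add' := fun x y => hbi.map_add x y
        map_smul' := fun c z => by rw [RingHom.id_apply]; exact hbi.map_rsmul c z } hbij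
  -- ==== Left self-injectivity ====
  obtain ⟨nM, σM, πM, hMsplit⟩ := adj_split_M e₁ nat₁₂
  have hAinj : Module.Injective A A := symm_self_injective k A hsymm
  have hMinj : Module.Injective A M :=
    injective_of_retract σM πM hMsplit (injective_pi nM hAinj)
  have Fmono : ∀ (X X' : FinModuleData B) (f : X.X →ₗ[B] X'.X), Function.Injective f →
      Function.Injective (rmapA B M A X.X X'.X f) :=
    fun X X' f hf => adj_Gmono e₂ nat₂₂ X X' f hf
  have hGMinj : Module.Injective B (BalTensor A N M) :=
    adj_crux e₁ nat₁₁ nat₁₂ Fmono M hMinj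
  have hBleft : Module.Injective B B :=
    injective_of_retract (eL.symm.toLinearMap ∘ₗ LinearMap.inl B B Q)
      ((LinearMap.fst B B Q).comp eL.toLinearMap)
      (fun b => by simp) hGMinj
  -- ==== Right self-injectivity ====
  obtain ⟨nN, iN, pN, hNsplit⟩ := adj_split_N_right e₁ nat₁₁ nat₁₂
  obtain ⟨nD, σN, πN, hNBsplit⟩ := adj_split_M e₂ nat₂₂
  obtain ⟨Θ, hΘbij, hΘadd, hΘa, hΘb⟩ := adj_theta e₁ nat₁₁ nat₁₂
  obtain ⟨s, hsbi, hsbij⟩ := hsymm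
  letI instDM : Module B (M →ₗ[k] k) := dualLMod k B M
  have hsmM : ∀ (b : B) (f : M →ₗ[k] k) (m : M), (b • f) m = f (op b • m) :=
    fun _ _ _ => rfl
  -- auxiliary facts about the symmetrising form
  let sE : A ≃ (A →ₗ[k] k) := Equiv.ofBijective s hsbij
  have hsE : ∀ u0 : A →ₗ[k] k, s (sE.symm u0) = u0 := fun u0 => sE.apply_symm_apply u0
  have hsmul1 : ∀ (a w : A), s (a * w) 1 = s w a := by
    intro a w
    rw [show a * w = a • w from rfl, hsbi.map_lsmul, dual_lsmul_apply, one_mul]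
  have hskl : ∀ (c : k) (w : A), s (algebraMap k A c * w) 1 = c • (s w 1) := by
    intro c w
    rw [show algebraMap k A c * w = algebraMap k A c • w from rfl, hsbi.map_lsmul,
      dual_lsmul_apply, one_mul, Algebra.algebraMap_eq_smul_one, map_smul]
  -- the isomorphism `Ξ : N ≅ Hom_k(M, k)` of left B-modules
  let Ξ0 : N → (M →ₗ[k] k) := fun nn =>
    { toFun := fun m => s (Θ nn m) 1
      map_add' := fun m m' => by
        show s (Θ nn (m + m')) 1 = s (Θ nn m) 1 + s (Θ nn m') 1
        rw [map_add, hsbi.map_add]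
        rfl
      map_smul' := fun c m => by
        show s (Θ nn (c • m)) 1 = c • s (Θ nn m) 1
        have h3 : c • m = (algebraMap k A c) • m := (algebraMap_smul A c m).symm
        rw [h3, map_smul, show algebraMap k A c • Θ nn m = algebraMap k A c * Θ nn m from rfl,
          hskl] }
  have Ξ0_apply : ∀ nn m, Ξ0 nn m = s (Θ nn m) 1 := fun _ _ => rfl
  have hΞ0b : ∀ (b : B) (nn : N), Ξ0 (b • nn) = b • Ξ0 nn := by
    intro b nn
    apply LinearMap.ext
    intro m
    show s (Θ (b • nn) m) 1 = s (Θ nn (op b • m)) 1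
    rw [hΘb]
  have hΞ0add : ∀ n1 n2, Ξ0 (n1 + n2) = Ξ0 n1 + Ξ0 n2 := by
    intro n1 n2
    apply LinearMap.ext
    intro m
    show s (Θ (n1 + n2) m) 1 = s (Θ n1 m) 1 + s (Θ n2 m) 1
    rw [hΘadd]
    show s ((Θ n1 + Θ n2) m) 1 = _
    rw [LinearMap.add_apply, hsbi.map_add]
    rfl
  have hΞ0inj : Function.Injective Ξ0 := by
    intro n1 n2 h
    apply hΘbij.injective
    apply LinearMap.ext
    intro m
    apply hsbij.injective
    apply LinearMap.ext
    intro a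
    have h5 : ∀ nn, s (Θ nn m) a = Ξ0 nn (a • m) := by
      intro nn
      show s (Θ nn m) a = s (Θ nn (a • m)) 1
      rw [map_smul, smul_eq_mul, hsmul1]
    rw [h5 n1, h5 n2, h]
  have hΞ0surj : Function.Surjective Ξ0 := by
    intro f
    have hsE_add : ∀ u1 u2 : A →ₗ[k] k, sE.symm (u1 + u2) = sE.symm u1 + sE.symm u2 := by
      intro u1 u2
      apply hsbij.injective
      rw [hsE, hsbi.map_add, hsE, hsE]
    let κ : M → (A →ₗ[k] k) := fun m =>
      { toFun := fun a => f (a • m)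
        map_add' := fun a a' => by
          show f ((a + a') • m) = f (a • m) + f (a' • m)
          rw [add_smul, map_add]
        map_smul' := fun c a => by
          show f ((c • a) • m) = c • f (a • m)
          rw [smul_assoc, map_smul] }
    have κ_apply : ∀ m a, κ m a = f (a • m) := fun _ _ => rfl
    let φ : M →ₗ[A] A :=
      { toFun := fun m => sE.symm (κ m)
        map_add' := fun m m' => by
          have hκ : κ (m + m') = κ m + κ m' := by
            apply LinearMap.ext
            intro a
            show f (a • (m + m')) = f (a • m) + f (a • m')
            rw [smul_add, map_add]
          show sE.symm (κ (m + m')) = sE.symm (κ m) + sE.symm (κ m')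
          rw [hκ, hsE_add]
        map_smul' := fun a' m => by
          show sE.symm (κ (a' • m)) = a' • sE.symm (κ m)
          apply hsbij.injective
          rw [hsE]
          have h12 : s (a' • sE.symm (κ m)) = a' • s (sE.symm (κ m)) := hsbi.map_lsmul a' _
          rw [h12, hsE]
          apply LinearMap.ext
          intro a
          rw [dual_lsmul_apply]
          show f (a • a' • m) = f ((a * a') • m)
          rw [mul_smul] }
    obtain ⟨nn, hnn⟩ := hΘbij.2 φ
    refine ⟨nn, ?_⟩
    apply LinearMap.ext
    intro m
    show s (Θ nn m) 1 = f m
    rw [hnn]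
    show s (sE.symm (κ m)) 1 = f m
    rw [hsE]
    show f ((1 : A) • m) = f m
    rw [one_smul]
  let Ξ : N ≃ₗ[B] (M →ₗ[k] k) := LinearEquiv.ofBijective
    { toFun := Ξ0
      map_add' := hΞ0add
      map_smul' := fun b nn => by rw [RingHom.id_apply]; exact hΞ0b b nn }
    ⟨hΞ0inj, hΞ0surj⟩
  -- `Hom_k(M,k)` is a direct summand of a finite free left `B`-module
  let σD : (M →ₗ[k] k) →ₗ[B] (Fin nD → B) := σN ∘ₗ Ξ.symm.toLinearMap
  let πD : (Fin nD → B) →ₗ[B] (M →ₗ[k] k) := Ξ.toLinearMap ∘ₗ πN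
  have hDsplit : ∀ f, πD (σD f) = f := by
    intro f
    show Ξ (πN (σN (Ξ.symm f))) = f
    rw [hNBsplit, LinearEquiv.apply_symm_apply]
  -- `M` is injective as a right `B`-module
  have hMrightinj : Module.Injective Bᵐᵒᵖ M := right_baer k B M hsmM σD πD hDsplit
  have hpiM : Module.Injective Bᵐᵒᵖ (Fin nN → M) := injective_pi nN hMrightinj
  -- `N ⊗ M` is a direct summand of `M^(nN)` as a right `B`-module
  let J1 : BalTensor A N M →ₗ[Bᵐᵒᵖ] BalTensor A (Fin nN → A) M :=
    lmapC A N (Fin nN → A) M B iN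
  let J2 : BalTensor A (Fin nN → A) M →ₗ[Bᵐᵒᵖ] BalTensor A N M :=
    lmapC A (Fin nN → A) N M B pN
  have hJ : ∀ z, J2 (J1 z) = z := by
    intro z
    show lmapC A (Fin nN → A) N M B pN (lmapC A N (Fin nN → A) M B iN z) = z
    rw [← lmapC_comp]
    have hpi : pN.comp iN = LinearMap.id := LinearMap.ext hNsplit
    rw [hpi]
    exact lmapC_id A N M B z
  have hGMrinj : Module.Injective Bᵐᵒᵖ (BalTensor A N M) :=
    injective_of_retract ((piIsoL A M B nN).toLinearMap ∘ₗ J1)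
      (J2 ∘ₗ (piIsoL A M B nN).symm.toLinearMap)
      (fun z => by
        simp only [LinearMap.comp_apply, LinearEquiv.coe_coe]
        rw [LinearEquiv.symm_apply_apply]
        exact hJ z) hpiM
  have hBright : Module.Injective Bᵐᵒᵖ B :=
    injective_of_retract (eR.symm.toLinearMap ∘ₗ LinearMap.inl Bᵐᵒᵖ B Q)
      ((LinearMap.fst Bᵐᵒᵖ B Q).comp eR.toLinearMap)
      (fun b => by simp) hGMrinj
  exact ⟨hBleft, hBright⟩


end

end JJ
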